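/- For every integer d ≥ 2, the family of polynomials (T'^{d−j−1}·T''^{i−1}·Ψ_{j−i}) indexed by pairs (i,j) with 1 ≤ i ≤ j ≤ d−1 is a ℂ-basis of the homogeneous component of degree d−2 of ℂ[T,T',T''] (each variable having degree 1). -/

import Mathlib

open MvPolynomial

/-- `Ψ₀ = 1`, `Ψ₁ = T`, `Ψ_{i+2} = T·Ψ_{i+1} − T'·T''·Ψ_i`, where `T = X 0`, `T' = X 1`,
`T'' = X 2`. -/
noncomputable def Psi : ℕ → MvPolynomial (Fin 3) ℂ
  | 0 => 1
  | 1 => X 0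
  | (n + 2) => X 0 * Psi (n + 1) - X 1 * X 2 * Psi n

lemma Psi_homog (n : ℕ) : (Psi n).IsHomogeneous n := by
  induction n using Nat.twoStepInduction with
  | zero => simpa [Psi] using isHomogeneous_one (Fin 3) ℂ
  | one => simpa [Psi] using isHomogeneous_X ℂ (0 : Fin 3)
  | more n ih1 ih2 =>
    rw [Psi]
    have h1 := (isHomogeneous_X ℂ (0 : Fin 3)).mul ih2
    have h2 := ((isHomogeneous_X ℂ (1 : Fin 3)).mul (isHomogeneous_X ℂ 2)).mul ih1
    rw [show (1:ℕ)+(n+1) = n+2 from by omega] at h1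
    rw [show (1:ℕ)+1+n = n+2 from by omega] at h2
    exact h1.sub h2

lemma Psi_coeff_top (n : ℕ) : coeff (Finsupp.single 0 n) (Psi n) = 1 := by
  induction n using Nat.twoStepInduction with
  | zero => simp [Psi]
  | one => simp [Psi, coeff_X]
  | more n ih1 ih2 =>
    rw [Psi, coeff_sub]
    have e1 : coeff (Finsupp.single (0:Fin 3) (n+2)) (X 0 * Psi (n+1)) = 1 := by
      have h : (Finsupp.single (0:Fin 3) (n+2)) = Finsupp.single 0 1 + Finsupp.single 0 (n+1) := by
        rw [← Finsupp.single_add]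
        congr 1
        omega
      rw [h, coeff_X_mul, ih2]
    have e2 : coeff (Finsupp.single (0:Fin 3) (n+2)) (X 1 * X 2 * Psi n) = 0 := by
      rw [mul_assoc, coeff_X_mul']
      simp
    rw [e1, e2, sub_zero]

lemma Psi_coeff_lt (n : ℕ) (m : Fin 3 →₀ ℕ) (h : coeff m (Psi n) ≠ 0) :
    m = Finsupp.single 0 n ∨ m 0 < n := by
  induction n using Nat.twoStepInduction generalizing m with
  | zero =>
    left
    rw [Psi, coeff_one] at h
    simp only [Finsupp.single_zero]
    by_contra hne
    exact h (if_neg (Ne.symm hne))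
  | one =>
    left
    rw [Psi, coeff_X'] at h
    by_contra hne
    exact h (if_neg (fun he => hne he.symm))
  | more n ih1 ih2 =>
    rw [Psi, coeff_sub] at h
    have hor : coeff m (X 0 * Psi (n+1)) ≠ 0 ∨ coeff m (X 1 * X 2 * Psi n) ≠ 0 := by
      by_contra hc
      push_neg at hc
      rw [hc.1, hc.2, sub_zero] at h
      exact h rfl
    rcases hor with h | h
    · rw [coeff_X_mul'] at h
      have hm0 : m 0 ≠ 0 := by
        by_contra h0
        simp [Finsupp.mem_support_iff, h0] at h
      rw [if_pos (Finsupp.mem_support_iff.mpr hm0)] at h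
      have hsub : ∀ i : Fin 3, (m - Finsupp.single 0 1 : Fin 3 →₀ ℕ) i = m i - Finsupp.single (0:Fin 3) 1 i :=
        fun i => Finsupp.tsub_apply m _ i
      rcases ih2 _ h with he | hlt
      · left
        have hle : Finsupp.single (0:Fin 3) 1 ≤ m :=
          Finsupp.single_le_iff.mpr (Nat.one_le_iff_ne_zero.mpr hm0)
        have hms : m - Finsupp.single 0 1 + Finsupp.single 0 1 = m := tsub_add_cancel_of_le hle
        rw [← hms, he, ← Finsupp.single_add]
      · right
        have h0 := hsub 0
        simp only [Finsupp.single_apply] at h0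
        rw [h0, if_true] at hlt
        omega
    · right
      rw [mul_assoc, coeff_X_mul'] at h
      split_ifs at h with h1
      · rw [coeff_X_mul'] at h
        split_ifs at h with h2
        · have key : (m - Finsupp.single 1 1 - Finsupp.single 2 1 : Fin 3 →₀ ℕ) 0 = m 0 := by
            rw [Finsupp.tsub_apply, Finsupp.tsub_apply]
            simp [Finsupp.single_apply]
          rcases ih1 _ h with he | hlt
          · rw [he, Finsupp.single_eq_same] at key
            omega
          · rw [key] at hlt
            exact Nat.lt_of_lt_of_le hlt (Nat.le_add_right n 2)
        · exact absurd rfl h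
      · exact absurd rfl h

lemma deg3 (m : Fin 3 →₀ ℕ) : m.degree = m 0 + m 1 + m 2 := by
  rw [Finsupp.degree_apply, Finset.sum_subset (Finset.subset_univ _)]
  · simp [Fin.sum_univ_three]
  · intro i _ hi
    exact Finsupp.notMem_support_iff.mp hi

abbrev Idx (d : ℕ) := {p : ℕ × ℕ // 1 ≤ p.1 ∧ p.1 ≤ p.2 ∧ p.2 ≤ d - 1}

noncomputable def fam (d : ℕ) (p : Idx d) : MvPolynomial (Fin 3) ℂ :=
  X 1 ^ (d - p.1.2 - 1) * X 2 ^ (p.1.1 - 1) * Psi (p.1.2 - p.1.1)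

lemma fam_eq (d : ℕ) (p : Idx d) :
    fam d p = monomial (Finsupp.single 1 (d - p.1.2 - 1) + Finsupp.single 2 (p.1.1 - 1)) 1
      * Psi (p.1.2 - p.1.1) := by
  rw [fam, X_pow_eq_monomial, X_pow_eq_monomial, monomial_mul, one_mul]

noncomputable def Mon (d : ℕ) (p : Idx d) : Fin 3 →₀ ℕ :=
  Finsupp.single 0 (p.1.2 - p.1.1) + Finsupp.single 1 (d - p.1.2 - 1)
    + Finsupp.single 2 (p.1.1 - 1)

lemma Mon_apply0 (d : ℕ) (p : Idx d) : Mon d p 0 = p.1.2 - p.1.1 := by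
  simp [Mon, Finsupp.single_apply]
lemma Mon_apply1 (d : ℕ) (p : Idx d) : Mon d p 1 = d - p.1.2 - 1 := by
  simp [Mon, Finsupp.single_apply]
lemma Mon_apply2 (d : ℕ) (p : Idx d) : Mon d p 2 = p.1.1 - 1 := by
  simp [Mon, Finsupp.single_apply]

lemma fam_homog (d : ℕ) (hd : 2 ≤ d) (p : Idx d) : (fam d p).IsHomogeneous (d - 2) := by
  obtain ⟨h1, h2, h3⟩ := p.2
  have hdeg : Finsupp.degree (Finsupp.single (1:Fin 3) (d - p.1.2 - 1)
      + Finsupp.single 2 (p.1.1 - 1)) = (d - p.1.2 - 1) + (p.1.1 - 1) := by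
    rw [deg3]
    simp [Finsupp.single_apply]
  have h := (isHomogeneous_monomial (1:ℂ) hdeg).mul (Psi_homog (p.1.2 - p.1.1))
  rw [← fam_eq] at h
  rw [show (d - 2) = (d - p.1.2 - 1) + (p.1.1 - 1) + (p.1.2 - p.1.1) from by omega]
  exact h

lemma idx_eq (d : ℕ) (hd : 2 ≤ d) (p q : Idx d)
    (h1 : d - q.1.2 - 1 = d - p.1.2 - 1) (h2 : q.1.1 - 1 = p.1.1 - 1) : q = p := by
  obtain ⟨hp1, hp2, hp3⟩ := p.2
  obtain ⟨hq1, hq2, hq3⟩ := q.2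
  apply Subtype.ext
  apply Prod.ext <;> omega

lemma coeff_fam (d : ℕ) (hd : 2 ≤ d) (p q : Idx d)
    (hle : q.1.2 - q.1.1 ≤ p.1.2 - p.1.1) :
    coeff (Mon d p) (fam d q) = if q = p then 1 else 0 := by
  rw [fam_eq, coeff_monomial_mul']
  by_cases hqp : q = p
  · subst hqp
    have hs : Finsupp.single (1:Fin 3) (d - q.1.2 - 1) + Finsupp.single 2 (q.1.1 - 1)
        ≤ Mon d q := by
      rw [Finsupp.le_def]
      intro i
      fin_cases i <;>
        simp [Mon_apply0, Mon_apply1, Mon_apply2, Finsupp.add_apply, Finsupp.single_apply]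
    rw [if_pos hs, if_pos rfl, one_mul]
    have hsub : Mon d q - (Finsupp.single (1:Fin 3) (d - q.1.2 - 1)
        + Finsupp.single 2 (q.1.1 - 1)) = Finsupp.single 0 (q.1.2 - q.1.1) := by
      ext i
      rw [Finsupp.tsub_apply]
      fin_cases i <;>
        simp [Mon_apply0, Mon_apply1, Mon_apply2, Finsupp.add_apply, Finsupp.single_apply]
    rw [hsub, Psi_coeff_top]
  · rw [if_neg hqp]
    split_ifs with hs
    · rw [one_mul]
      by_contra hne
      set v := Mon d p - (Finsupp.single (1:Fin 3) (d - q.1.2 - 1)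
        + Finsupp.single 2 (q.1.1 - 1)) with hv
      have hdegv : v.degree = q.1.2 - q.1.1 := by
        by_contra hdne
        exact hne ((Psi_homog _).coeff_eq_zero hdne)
      have hv0 : v 0 = p.1.2 - p.1.1 := by
        rw [hv, Finsupp.tsub_apply, Mon_apply0]
        simp [Finsupp.add_apply, Finsupp.single_apply]
      have hv1 : v 1 = (d - p.1.2 - 1) - (d - q.1.2 - 1) := by
        rw [hv, Finsupp.tsub_apply, Mon_apply1]
        simp [Finsupp.add_apply, Finsupp.single_apply]
      have hv2 : v 2 = (p.1.1 - 1) - (q.1.1 - 1) := by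
        rw [hv, Finsupp.tsub_apply, Mon_apply2]
        simp [Finsupp.add_apply, Finsupp.single_apply]
      have hs1 : d - q.1.2 - 1 ≤ d - p.1.2 - 1 := by
        have := Finsupp.le_def.mp hs 1
        simpa [Mon_apply1, Finsupp.add_apply, Finsupp.single_apply] using this
      have hs2 : q.1.1 - 1 ≤ p.1.1 - 1 := by
        have := Finsupp.le_def.mp hs 2
        simpa [Mon_apply2, Finsupp.add_apply, Finsupp.single_apply] using this
      rw [deg3, hv0, hv1, hv2] at hdegv
      exact hqp (idx_eq d hd p q (by omega) (by omega))
    · rfl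

/-- for `d ≥ 2`, the family `(T'^{d−j−1}·T''^{i−1}·Ψ_{j−i})_{1 ≤ i ≤ j ≤ d−1}`
is a `ℂ`-basis of the degree-`(d−2)` homogeneous component of `ℂ[T,T',T'']`. -/
theorem stmt7 (d : ℕ) (hd : 2 ≤ d) :
    LinearIndependent ℂ (fun p : {p : ℕ × ℕ // 1 ≤ p.1 ∧ p.1 ≤ p.2 ∧ p.2 ≤ d - 1} =>
        X 1 ^ (d - p.1.2 - 1) * X 2 ^ (p.1.1 - 1) * Psi (p.1.2 - p.1.1)) ∧
    Submodule.span ℂ (Set.range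
        (fun p : {p : ℕ × ℕ // 1 ≤ p.1 ∧ p.1 ≤ p.2 ∧ p.2 ≤ d - 1} =>
          X 1 ^ (d - p.1.2 - 1) * X 2 ^ (p.1.1 - 1) * Psi (p.1.2 - p.1.1))) =
      homogeneousSubmodule (Fin 3) ℂ (d - 2) := by

  have hfun : (fun p : Idx d =>
      X 1 ^ (d - p.1.2 - 1) * X 2 ^ (p.1.1 - 1) * Psi (p.1.2 - p.1.1)) = fam d := rfl
  rw [hfun]
  constructor
  · -- linear independence
    rw [linearIndependent_iff']
    intro s g hg p hp
    by_contra hgp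
    obtain ⟨p₀, hp₀, hmax⟩ := Finset.exists_max_image (s.filter fun q => g q ≠ 0)
      (fun q => q.1.2 - q.1.1) ⟨p, Finset.mem_filter.mpr ⟨hp, hgp⟩⟩
    rw [Finset.mem_filter] at hp₀
    have hc := congrArg (coeff (Mon d p₀)) hg
    rw [coeff_sum, coeff_zero] at hc
    simp only [coeff_smul, smul_eq_mul] at hc
    rw [Finset.sum_eq_single p₀ (fun q hq hqp => ?_) (fun h => absurd hp₀.1 h)] at hc
    · rw [coeff_fam d hd p₀ p₀ le_rfl, if_pos rfl, mul_one] at hc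
      exact hp₀.2 hc
    · by_cases hgq : g q = 0
      · rw [hgq, zero_mul]
      · rw [coeff_fam d hd p₀ q (hmax q (Finset.mem_filter.mpr ⟨hq, hgq⟩)), if_neg hqp,
          mul_zero]
  · -- span
    set S := Submodule.span ℂ (Set.range (fam d)) with hS
    apply le_antisymm
    · rw [Submodule.span_le]
      rintro _ ⟨p, rfl⟩
      rw [SetLike.mem_coe, mem_homogeneousSubmodule]
      exact fam_homog d hd p
    · -- every monomial of degree d-2 is in the span
      have key : ∀ a : ℕ, ∀ m : Fin 3 →₀ ℕ, m 0 = a → m 0 + m 1 + m 2 = d - 2 →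
          (monomial m (1:ℂ)) ∈ S := by
        intro a
        induction a using Nat.strong_induction_on with
        | _ a ih =>
          intro m hma hdeg
          have hpmem : 1 ≤ m 2 + 1 ∧ m 2 + 1 ≤ d - 1 - m 1 ∧ d - 1 - m 1 ≤ d - 1 := by omega
          set p : Idx d := ⟨(m 2 + 1, d - 1 - m 1), hpmem⟩ with hp
          have e1 : d - (d - 1 - m 1) - 1 = m 1 := by omega
          have e2 : m 2 + 1 - 1 = m 2 := by omega
          have e3 : d - 1 - m 1 - (m 2 + 1) = m 0 := by omega
          have hfam : fam d p
              = monomial (Finsupp.single 1 (m 1) + Finsupp.single 2 (m 2)) 1 * Psi (m 0) := by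
            rw [fam_eq]
            simp only [hp]
            rw [e1, e2, e3]
          set r := fam d p - monomial m 1 with hr
          -- every monomial of r has 0-exponent < m 0
          have hr0 : ∀ v : Fin 3 →₀ ℕ, coeff v r ≠ 0 → v 0 < m 0 := by
            intro v hv
            rw [hr, coeff_sub] at hv
            have hsm : Finsupp.single (1:Fin 3) (m 1) + Finsupp.single 2 (m 2) ≤ m := by
              rw [Finsupp.le_def]
              intro i
              fin_cases i <;> simp [Finsupp.add_apply, Finsupp.single_apply]
            have hmsub : m - (Finsupp.single (1:Fin 3) (m 1) + Finsupp.single 2 (m 2))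
                = Finsupp.single 0 (m 0) := by
              ext i
              rw [Finsupp.tsub_apply]
              fin_cases i <;> simp [Finsupp.add_apply, Finsupp.single_apply]
            by_cases hvm : v = m
            · exfalso
              rw [hvm, coeff_monomial, if_pos rfl, hfam, coeff_monomial_mul', if_pos hsm,
                one_mul, hmsub, Psi_coeff_top, sub_self] at hv
              exact hv rfl
            · rw [coeff_monomial, if_neg (fun h => hvm h.symm), sub_zero, hfam,
                coeff_monomial_mul'] at hv
              split_ifs at hv with hsv
              · rw [one_mul] at hv
                rcases Psi_coeff_lt _ _ hv with he | hlt
                · exfalso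
                  apply hvm
                  have := tsub_add_cancel_of_le hsv
                  rw [← this, he]
                  rw [← hmsub, tsub_add_cancel_of_le hsm]
                · have hv0 : (v - (Finsupp.single (1:Fin 3) (m 1) + Finsupp.single 2 (m 2))
                      : Fin 3 →₀ ℕ) 0 = v 0 := by
                    rw [Finsupp.tsub_apply]
                    simp [Finsupp.add_apply, Finsupp.single_apply]
                  rw [hv0] at hlt
                  omega
              · exact absurd rfl hv
          -- r is homogeneous of degree d - 2
          have hrhom : r.IsHomogeneous (d - 2) :=
            (fam_homog d hd p).sub (isHomogeneous_monomial 1 (by rw [deg3]; exact hdeg))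
          -- r ∈ S by induction
          have hrS : r ∈ S := by
            rw [r.as_sum]
            refine Submodule.sum_mem S fun v hv => ?_
            have hcv : coeff v r ≠ 0 := mem_support_iff.mp hv
            have hvd : v.degree = d - 2 := by
              by_contra hne
              exact hcv (hrhom.coeff_eq_zero hne)
            have : monomial v (coeff v r) = coeff v r • monomial v (1:ℂ) := by
              rw [smul_monomial, smul_eq_mul, mul_one]
            rw [this]
            refine Submodule.smul_mem S _ (ih (v 0) (by rw [← hma]; exact hr0 v hcv) v rfl ?_)
            rw [← deg3]
            exact hvd
          have : monomial m (1:ℂ) = fam d p - r := by rw [hr, sub_sub_cancel]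
          rw [this]
          exact Submodule.sub_mem S (Submodule.subset_span ⟨p, rfl⟩) hrS
      intro q hq
      rw [mem_homogeneousSubmodule] at hq
      rw [q.as_sum]
      refine Submodule.sum_mem S fun v hv => ?_
      have hcv : coeff v q ≠ 0 := mem_support_iff.mp hv
      have hvd : v.degree = d - 2 := by
        by_contra hne
        exact hcv (hq.coeff_eq_zero hne)
      have : monomial v (coeff v q) = coeff v q • monomial v (1:ℂ) := by
        rw [smul_monomial, smul_eq_mul, mul_one]
      rw [this]
      exact Submodule.smul_mem S _ (key (v 0) v rfl (by rw [← deg3]; exact hvd))
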